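/- arXiv:2510.04807 — 3 statements merged into one kernel-verified Lean document; each statement's English description precedes it below -/
import Mathlib

section
/- (Ball invariance, Lemma 1.) Let C be an affine feedback policy with x̄₀ = μ_I, let r_I, r_N ≥ 0, and let λ ≥ 0. Then the following are equivalent: (i) every moment pair of the form (μ₀, λI) belonging to P^BALL(μ_I, r_I), when propagated by C, satisfies the moment-form state and control constraints at every timestep and has terminal pair (μ_T, Σ_T) ∈ P^BALL(x̄_T, r_N); (ii) every moment pair (μ₀, Σ₀) ∈ P^BALL(μ_I, r_I) with Σ₀ ⪰ λI, when propagated by C, satisfies the moment-form state and control constraints at every timestep and has terminal pair (μ_T, Σ_T) ∈ P^BALL(x̄_T, r_N). -/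
open Matrix

noncomputable def euclNorm {n : ℕ} (v : Fin n → ℝ) : ℝ := Real.sqrt (∑ i, v i ^ 2)

noncomputable def lamMax {n : ℕ} (M : Matrix (Fin n) (Fin n) ℝ) : ℝ :=
  sSup {r : ℝ | ∃ v : Fin n → ℝ, euclNorm v = 1 ∧ r = v ⬝ᵥ M.mulVec v}

noncomputable def lamMin {n : ℕ} (M : Matrix (Fin n) (Fin n) ℝ) : ℝ :=
  sInf {r : ℝ | ∃ v : Fin n → ℝ, euclNorm v = 1 ∧ r = v ⬝ᵥ M.mulVec v}

noncomputable def specNorm {n p : ℕ} (M : Matrix (Fin n) (Fin p) ℝ) : ℝ :=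
  Real.sqrt (lamMax (Mᵀ * M))

structure Policy (n m T : ℕ) (A : Matrix (Fin n) (Fin n) ℝ) (B : Matrix (Fin n) (Fin m) ℝ) where
  xbar : ℕ → Fin n → ℝ
  ubar : ℕ → Fin m → ℝ
  K : ℕ → Matrix (Fin m) (Fin n) ℝ
  xbar_dyn : ∀ k, k < T → xbar (k + 1) = A.mulVec (xbar k) + B.mulVec (ubar k)

namespace Policy

variable {n m T : ℕ} {A : Matrix (Fin n) (Fin n) ℝ} {B : Matrix (Fin n) (Fin m) ℝ}

noncomputable def mean (C : Policy n m T A B) (mu0 : Fin n → ℝ) : ℕ → Fin n → ℝ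
  | 0 => mu0
  | k + 1 => A.mulVec (C.mean mu0 k) + B.mulVec (C.ubar k)
      + B.mulVec ((C.K k).mulVec (C.mean mu0 k - C.xbar k))

noncomputable def cov (C : Policy n m T A B) (D : Matrix (Fin n) (Fin n) ℝ)
    (Sig0 : Matrix (Fin n) (Fin n) ℝ) : ℕ → Matrix (Fin n) (Fin n) ℝ
  | 0 => Sig0
  | k + 1 => (A + B * C.K k) * C.cov D Sig0 k * (A + B * C.K k)ᵀ + D * Dᵀ

noncomputable def clProd (C : Policy n m T A B) : ℕ → Matrix (Fin n) (Fin n) ℝ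
  | 0 => 1
  | k + 1 => (A + B * C.K k) * C.clProd k

end Policy

def stateOK {n m T : ℕ} {A : Matrix (Fin n) (Fin n) ℝ} {B : Matrix (Fin n) (Fin m) ℝ}
    (c : ℝ) {I : ℕ} (ax : Fin I → Fin n → ℝ) (bx : Fin I → ℝ)
    (D : Matrix (Fin n) (Fin n) ℝ) (C : Policy n m T A B)
    (mu0 : Fin n → ℝ) (Sig0 : Matrix (Fin n) (Fin n) ℝ) : Prop :=
  ∀ i : Fin I, ∀ k ≤ T,
    ax i ⬝ᵥ C.mean mu0 k + c * Real.sqrt (ax i ⬝ᵥ (C.cov D Sig0 k).mulVec (ax i)) ≤ bx i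

def ctrlOK {n m T : ℕ} {A : Matrix (Fin n) (Fin n) ℝ} {B : Matrix (Fin n) (Fin m) ℝ}
    (c : ℝ) {J : ℕ} (au : Fin J → Fin m → ℝ) (bu : Fin J → ℝ)
    (D : Matrix (Fin n) (Fin n) ℝ) (C : Policy n m T A B)
    (mu0 : Fin n → ℝ) (Sig0 : Matrix (Fin n) (Fin n) ℝ) : Prop :=
  ∀ j : Fin J, ∀ k < T,
    au j ⬝ᵥ (C.ubar k + (C.K k).mulVec (C.mean mu0 k - C.xbar k))
      + c * Real.sqrt (au j ⬝ᵥ (C.K k * C.cov D Sig0 k * (C.K k)ᵀ).mulVec (au j)) ≤ bu j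

def inBall {n : ℕ} (c : ℝ) (muHat : Fin n → ℝ) (rHat : ℝ)
    (mu : Fin n → ℝ) (Sig : Matrix (Fin n) (Fin n) ℝ) : Prop :=
  euclNorm (mu - muHat) + c * Real.sqrt (lamMax Sig) ≤ rHat

def BRS {n m : ℕ} (T : ℕ) (A : Matrix (Fin n) (Fin n) ℝ) (B : Matrix (Fin n) (Fin m) ℝ)
    (D : Matrix (Fin n) (Fin n) ℝ) (c : ℝ) {I J : ℕ}
    (ax : Fin I → Fin n → ℝ) (bx : Fin I → ℝ) (au : Fin J → Fin m → ℝ) (bu : Fin J → ℝ)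
    (S : Set ((Fin n → ℝ) × Matrix (Fin n) (Fin n) ℝ)) :
    Set ((Fin n → ℝ) × Matrix (Fin n) (Fin n) ℝ) :=
  {p | p.2.PosSemidef ∧ ∃ C : Policy n m T A B, C.xbar 0 = p.1 ∧
    stateOK c ax bx D C p.1 p.2 ∧ ctrlOK c au bu D C p.1 p.2 ∧
    (C.mean p.1 T, C.cov D p.2 T) ∈ S}

def Proj {n : ℕ} (S : Set ((Fin n → ℝ) × Matrix (Fin n) (Fin n) ℝ)) : Set (Fin n → ℝ) :=
  {mu | ∃ Sig, (mu, Sig) ∈ S}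

section Aux

open Matrix

-- ## Euclidean norm lemmas

lemma euclNorm_eq_norm {n : ℕ} (v : Fin n → ℝ) :
    euclNorm v = ‖(WithLp.equiv 2 (Fin n → ℝ)).symm v‖ := by
  rw [EuclideanSpace.norm_eq]; simp [euclNorm, sq_abs]

lemma euclNorm_nonneg' {n : ℕ} (v : Fin n → ℝ) : 0 ≤ euclNorm v := Real.sqrt_nonneg _

lemma euclNorm_zero' {n : ℕ} : euclNorm (0 : Fin n → ℝ) = 0 := by simp [euclNorm]

lemma euclNorm_eq_zero' {n : ℕ} {v : Fin n → ℝ} (h : euclNorm v = 0) : v = 0 := by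
  rw [euclNorm_eq_norm] at h
  simpa using norm_eq_zero.mp h

lemma euclNorm_pos {n : ℕ} {v : Fin n → ℝ} (hv : v ≠ 0) : 0 < euclNorm v := by
  rw [euclNorm_eq_norm, norm_pos_iff]
  simpa using hv

lemma dot_le_enorm {n : ℕ} (v w : Fin n → ℝ) : v ⬝ᵥ w ≤ euclNorm v * euclNorm w := by
  rw [euclNorm_eq_norm, euclNorm_eq_norm]
  have h := abs_real_inner_le_norm ((WithLp.equiv 2 (Fin n → ℝ)).symm v)
    ((WithLp.equiv 2 (Fin n → ℝ)).symm w)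
  have h2 : (inner ℝ ((WithLp.equiv 2 (Fin n → ℝ)).symm v)
      ((WithLp.equiv 2 (Fin n → ℝ)).symm w) : ℝ) = v ⬝ᵥ w := by
    simp [PiLp.inner_apply, dotProduct, mul_comm]
  rw [h2] at h
  exact (le_abs_self _).trans h

lemma euclNorm_smul {n : ℕ} (t : ℝ) (v : Fin n → ℝ) : euclNorm (t • v) = |t| * euclNorm v := by
  simp only [euclNorm_eq_norm]
  rw [show (WithLp.equiv 2 (Fin n → ℝ)).symm (t • v)
    = t • (WithLp.equiv 2 (Fin n → ℝ)).symm v from rfl]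
  simp [norm_smul]

lemma euclNorm_triangle {n : ℕ} (v w : Fin n → ℝ) : euclNorm (v + w) ≤ euclNorm v + euclNorm w := by
  simp only [euclNorm_eq_norm]
  exact norm_add_le _ _

lemma euclNorm_sq {n : ℕ} (v : Fin n → ℝ) : euclNorm v ^ 2 = v ⬝ᵥ v := by
  simp only [euclNorm]
  rw [Real.sq_sqrt (by positivity)]
  simp [dotProduct, sq]

lemma exists_dir {n : ℕ} {r : ℝ} (hr : 0 ≤ r) (z : Fin n → ℝ) :
    ∃ w : Fin n → ℝ, euclNorm w ≤ r ∧ r * euclNorm z ≤ z ⬝ᵥ w := by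
  rcases eq_or_ne z 0 with rfl | hz
  · exact ⟨0, by rw [euclNorm_zero']; exact hr, by simp [euclNorm_zero']⟩
  · have hp := euclNorm_pos hz
    refine ⟨(r / euclNorm z) • z, ?_, ?_⟩
    · rw [euclNorm_smul, abs_of_nonneg (div_nonneg hr hp.le)]
      rw [div_mul_eq_mul_div, mul_div_assoc, div_self hp.ne']
      simp
    · have e : z ⬝ᵥ ((r / euclNorm z) • z) = r * euclNorm z := by
        rw [dotProduct_smul, smul_eq_mul, ← euclNorm_sq, sq]
        field_simp [hp.ne']
      rw [e]

-- ## lamMax lemmas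

lemma euclNorm_single {n : ℕ} (hn : 1 ≤ n) : euclNorm (Pi.single (⟨0, hn⟩ : Fin n) (1:ℝ)) = 1 := by
  simp only [euclNorm]
  rw [Finset.sum_eq_single (⟨0, hn⟩ : Fin n)]
  · simp
  · intro b _ hb; simp [Pi.single_apply, hb]
  · simp

lemma setQ_nonempty {n : ℕ} (hn : 1 ≤ n) (M : Matrix (Fin n) (Fin n) ℝ) :
    {r : ℝ | ∃ v : Fin n → ℝ, euclNorm v = 1 ∧ r = v ⬝ᵥ M.mulVec v}.Nonempty :=
  ⟨_, Pi.single (⟨0, hn⟩ : Fin n) (1:ℝ), euclNorm_single hn, rfl⟩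

lemma abs_le_one_of_enorm {n : ℕ} {v : Fin n → ℝ} (h : euclNorm v = 1) (i : Fin n) : |v i| ≤ 1 := by
  have h2 : ∑ j, v j ^ 2 = 1 := by
    have := congrArg (· ^ 2) h
    simpa [euclNorm, Real.sq_sqrt (by positivity : (0:ℝ) ≤ ∑ j, v j ^2)] using this
  have : v i ^ 2 ≤ 1 := by
    rw [← h2]
    exact Finset.single_le_sum (fun j _ => sq_nonneg (v j)) (Finset.mem_univ i)
  nlinarith [abs_nonneg (v i), sq_abs (v i)]

lemma setQ_bddAbove {n : ℕ} (M : Matrix (Fin n) (Fin n) ℝ) :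
    BddAbove {r : ℝ | ∃ v : Fin n → ℝ, euclNorm v = 1 ∧ r = v ⬝ᵥ M.mulVec v} := by
  refine ⟨∑ i, ∑ j, |M i j|, ?_⟩
  rintro r ⟨v, hv, rfl⟩
  simp only [dotProduct, mulVec]
  calc ∑ i, v i * ∑ j, M i j * v j ≤ ∑ i, ∑ j, |M i j| := by
        refine Finset.sum_le_sum fun i _ => ?_
        rw [Finset.mul_sum]
        refine Finset.sum_le_sum fun j _ => ?_
        calc v i * (M i j * v j) ≤ |v i * (M i j * v j)| := le_abs_self _
          _ = |v i| * |M i j| * |v j| := by rw [abs_mul, abs_mul]; ring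
          _ ≤ 1 * |M i j| * 1 := by
              have h1 := abs_le_one_of_enorm hv i
              have h2 := abs_le_one_of_enorm hv j
              have := abs_nonneg (M i j)
              nlinarith [abs_nonneg (v i), abs_nonneg (v j),
                mul_le_one₀ h1 (abs_nonneg (v j)) h2]
          _ = |M i j| := by ring

lemma quad_le_lamMax {n : ℕ} (M : Matrix (Fin n) (Fin n) ℝ) {v : Fin n → ℝ}
    (hv : euclNorm v = 1) : v ⬝ᵥ M.mulVec v ≤ lamMax M :=
  le_csSup (setQ_bddAbove M) ⟨v, hv, rfl⟩

lemma quad_le_lamMax_sq {n : ℕ} (M : Matrix (Fin n) (Fin n) ℝ) (v : Fin n → ℝ) :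
    v ⬝ᵥ M.mulVec v ≤ lamMax M * euclNorm v ^ 2 := by
  rcases eq_or_ne v 0 with rfl | hv
  · have h0 : euclNorm (0 : Fin n → ℝ) = 0 := by simp [euclNorm]
    simp [h0]
  · have hp := euclNorm_pos hv
    set t := (euclNorm v)⁻¹ with ht
    have htpos : 0 < t := inv_pos.mpr hp
    have hu : euclNorm (t • v) = 1 := by
      rw [euclNorm_smul, abs_of_pos htpos, ht, inv_mul_cancel₀ hp.ne']
    have h := quad_le_lamMax M hu
    have hq : (t • v) ⬝ᵥ M.mulVec (t • v) = t ^ 2 * (v ⬝ᵥ M.mulVec v) := by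
      rw [Matrix.mulVec_smul, smul_dotProduct, dotProduct_smul,
        smul_eq_mul, smul_eq_mul]; ring
    rw [hq] at h
    have : v ⬝ᵥ M.mulVec v ≤ lamMax M / t ^ 2 := by
      rw [le_div_iff₀ (by positivity)]; linarith [h]
    calc v ⬝ᵥ M.mulVec v ≤ lamMax M / t ^ 2 := this
      _ = lamMax M * euclNorm v ^ 2 := by rw [ht]; field_simp

lemma lamMax_smul_one {n : ℕ} (hn : 1 ≤ n) (lam : ℝ) :
    lamMax (lam • (1 : Matrix (Fin n) (Fin n) ℝ)) = lam := by
  have hset : {r : ℝ | ∃ v : Fin n → ℝ, euclNorm v = 1 ∧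
      r = v ⬝ᵥ (lam • (1 : Matrix (Fin n) (Fin n) ℝ)).mulVec v} = {lam} := by
    rw [Set.eq_singleton_iff_unique_mem]
    obtain ⟨r, v, hv, hr⟩ := setQ_nonempty hn (lam • (1 : Matrix (Fin n) (Fin n) ℝ))
    have key : ∀ w : Fin n → ℝ, euclNorm w = 1 →
        w ⬝ᵥ (lam • (1 : Matrix (Fin n) (Fin n) ℝ)).mulVec w = lam := by
      intro w hw
      rw [Matrix.smul_mulVec, Matrix.one_mulVec, dotProduct_smul, smul_eq_mul,
        ← euclNorm_sq, hw]
      ring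
    constructor
    · exact ⟨v, hv, (key v hv).symm⟩
    · rintro s ⟨w, hw, rfl⟩
      exact key w hw
  rw [lamMax, hset, csSup_singleton]

lemma lamMax_mem {n : ℕ} (hn : 1 ≤ n) (M : Matrix (Fin n) (Fin n) ℝ) :
    ∃ v : Fin n → ℝ, euclNorm v = 1 ∧ lamMax M = v ⬝ᵥ M.mulVec v := by
  have hcont : Continuous (fun v : Fin n → ℝ => v ⬝ᵥ M.mulVec v) := by
    simp only [dotProduct, mulVec]
    exact continuous_finset_sum _ fun i _ =>
      (continuous_apply i).mul (continuous_finset_sum _ fun j _ =>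
        continuous_const.mul (continuous_apply j))
  have hecont : Continuous (fun v : Fin n → ℝ => euclNorm v) := by
    simp only [euclNorm]
    exact Real.continuous_sqrt.comp (continuous_finset_sum _ fun i _ => (continuous_apply i).pow 2)
  have hclosed : IsClosed {v : Fin n → ℝ | euclNorm v = 1} :=
    isClosed_singleton.preimage hecont
  have hbdd : Bornology.IsBounded {v : Fin n → ℝ | euclNorm v = 1} := by
    rw [Metric.isBounded_iff_subset_closedBall 0]
    refine ⟨1, fun v hv => ?_⟩
    simp only [Metric.mem_closedBall, dist_zero_right]
    rw [pi_norm_le_iff_of_nonneg zero_le_one]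
    intro i
    rw [Real.norm_eq_abs]
    exact abs_le_one_of_enorm hv i
  have hcomp : IsCompact {v : Fin n → ℝ | euclNorm v = 1} :=
    Metric.isCompact_of_isClosed_isBounded hclosed hbdd
  have himg : {r : ℝ | ∃ v : Fin n → ℝ, euclNorm v = 1 ∧ r = v ⬝ᵥ M.mulVec v} =
      (fun v : Fin n → ℝ => v ⬝ᵥ M.mulVec v) '' {v : Fin n → ℝ | euclNorm v = 1} := by
    ext r; constructor
    · rintro ⟨v, hv, rfl⟩; exact ⟨v, hv, rfl⟩
    · rintro ⟨v, hv, rfl⟩; exact ⟨v, hv, rfl⟩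
  have := (hcomp.image hcont).sSup_mem (by
    rw [← himg]; exact setQ_nonempty hn M)
  rw [← himg] at this
  exact this

-- ## PSD lemmas

lemma psd_dot {n : ℕ} {M : Matrix (Fin n) (Fin n) ℝ} (h : M.PosSemidef) (x : Fin n → ℝ) :
    0 ≤ x ⬝ᵥ M.mulVec x := by simpa using h.dotProduct_mulVec_nonneg x

lemma psd_conj {n p : ℕ} {M : Matrix (Fin n) (Fin n) ℝ} (h : M.PosSemidef)
    (P : Matrix (Fin p) (Fin n) ℝ) : (P * M * Pᵀ).PosSemidef := by
  have := h.mul_mul_conjTranspose_same P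
  simpa [Matrix.conjTranspose_eq_transpose_of_trivial] using this

lemma psd_mul_transpose {n p : ℕ} (D : Matrix (Fin n) (Fin p) ℝ) : (D * Dᵀ).PosSemidef := by
  have := Matrix.posSemidef_self_mul_conjTranspose D
  simpa [Matrix.conjTranspose_eq_transpose_of_trivial] using this

lemma psd_smul_one {n : ℕ} {lam : ℝ} (h : 0 ≤ lam) :
    (lam • (1 : Matrix (Fin n) (Fin n) ℝ)).PosSemidef := by
  rw [Matrix.posSemidef_iff_dotProduct_mulVec]
  constructor
  · show (lam • (1 : Matrix (Fin n) (Fin n) ℝ))ᴴ = lam • 1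
    simp
  · intro x
    have : star x ⬝ᵥ (lam • (1 : Matrix (Fin n) (Fin n) ℝ)) *ᵥ x = lam * (star x ⬝ᵥ x) := by
      rw [Matrix.smul_mulVec, Matrix.one_mulVec, dotProduct_smul, smul_eq_mul]
    rw [this]
    exact mul_nonneg h (dotProduct_star_self_nonneg x)

-- ## quadratic form identities

lemma dot_mulVec_left {n p : ℕ} (P : Matrix (Fin p) (Fin n) ℝ) (a : Fin p → ℝ) (w : Fin n → ℝ) :
    a ⬝ᵥ P.mulVec w = (Pᵀ.mulVec a) ⬝ᵥ w := by
  rw [Matrix.dotProduct_mulVec, ← Matrix.mulVec_transpose]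

lemma quad_conj {n p : ℕ} (P : Matrix (Fin p) (Fin n) ℝ) (M : Matrix (Fin n) (Fin n) ℝ)
    (a : Fin p → ℝ) :
    a ⬝ᵥ (P * M * Pᵀ).mulVec a = (Pᵀ.mulVec a) ⬝ᵥ M.mulVec (Pᵀ.mulVec a) := by
  rw [← Matrix.mulVec_mulVec, ← Matrix.mulVec_mulVec, Matrix.dotProduct_mulVec,
    ← Matrix.mulVec_transpose]

lemma quad_smul_one {n : ℕ} (lam : ℝ) (v : Fin n → ℝ) :
    v ⬝ᵥ (lam • (1 : Matrix (Fin n) (Fin n) ℝ)).mulVec v = lam * euclNorm v ^ 2 := by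
  rw [Matrix.smul_mulVec, Matrix.one_mulVec, dotProduct_smul, smul_eq_mul, euclNorm_sq]

-- ## scalar square-root lemma

lemma sqrt_key {lam sig u t w : ℝ} (hl : 0 ≤ lam) (hls : lam ≤ sig) (hw : 0 ≤ w)
    (hu : lam * w ^ 2 ≤ u) (ht : t ≤ u + (sig - lam) * w ^ 2) :
    Real.sqrt t ≤ Real.sqrt u + (Real.sqrt sig - Real.sqrt lam) * w := by
  have hu0 : 0 ≤ u := le_trans (by positivity) hu
  have h1 : Real.sqrt lam * w ≤ Real.sqrt u := by
    have : Real.sqrt (lam * w ^ 2) ≤ Real.sqrt u := Real.sqrt_le_sqrt hu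
    rwa [Real.sqrt_mul hl, Real.sqrt_sq hw] at this
  have h2 : Real.sqrt lam ≤ Real.sqrt sig := Real.sqrt_le_sqrt hls
  have hsl : Real.sqrt lam ^ 2 = lam := Real.sq_sqrt hl
  have hss : Real.sqrt sig ^ 2 = sig := Real.sq_sqrt (le_trans hl hls)
  have hsu : Real.sqrt u ^ 2 = u := Real.sq_sqrt hu0
  have hrhs : 0 ≤ Real.sqrt u + (Real.sqrt sig - Real.sqrt lam) * w := by
    have := Real.sqrt_nonneg u
    nlinarith
  have key : t ≤ (Real.sqrt u + (Real.sqrt sig - Real.sqrt lam) * w) ^ 2 := by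
    nlinarith [sq_nonneg (Real.sqrt sig - Real.sqrt lam), Real.sqrt_nonneg u,
      Real.sqrt_nonneg lam, Real.sqrt_nonneg sig,
      mul_le_mul_of_nonneg_right h1 (mul_nonneg (sub_nonneg.mpr h2) hw)]
  calc Real.sqrt t ≤ Real.sqrt ((Real.sqrt u + (Real.sqrt sig - Real.sqrt lam) * w) ^ 2) :=
        Real.sqrt_le_sqrt key
    _ = _ := Real.sqrt_sq hrhs

-- ## policy recursion lemmas

lemma mean_sub {n m T : ℕ} {A : Matrix (Fin n) (Fin n) ℝ} {B : Matrix (Fin n) (Fin m) ℝ}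
    (C : Policy n m T A B) (mu0 : Fin n → ℝ) :
    ∀ k, k ≤ T → C.mean mu0 k - C.xbar k = (C.clProd k).mulVec (mu0 - C.xbar 0)
  | 0, _ => by simp [Policy.mean, Policy.clProd, Matrix.one_mulVec]
  | (k+1), h => by
    have hk : k < T := Nat.lt_of_succ_le h
    have ih := mean_sub C mu0 k (le_of_lt hk)
    have e1 : C.mean mu0 k = (C.clProd k).mulVec (mu0 - C.xbar 0) + C.xbar k :=
      sub_eq_iff_eq_add.mp ih
    rw [show C.mean mu0 (k+1) = A.mulVec (C.mean mu0 k) + B.mulVec (C.ubar k)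
      + B.mulVec ((C.K k).mulVec (C.mean mu0 k - C.xbar k)) from rfl,
      show C.clProd (k+1) = (A + B * C.K k) * C.clProd k from rfl,
      C.xbar_dyn k hk, ih, e1]
    simp only [Matrix.mulVec_add, Matrix.add_mulVec, Matrix.add_mul,
      ← Matrix.mulVec_mulVec]
    abel

lemma cov_sub {n m T : ℕ} {A : Matrix (Fin n) (Fin n) ℝ} {B : Matrix (Fin n) (Fin m) ℝ}
    (C : Policy n m T A B) (D S S' : Matrix (Fin n) (Fin n) ℝ) :
    ∀ k, C.cov D S k - C.cov D S' k = C.clProd k * (S - S') * (C.clProd k)ᵀ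
  | 0 => by simp [Policy.cov, Policy.clProd]
  | (k+1) => by
    have ih := cov_sub C D S S' k
    rw [show C.cov D S (k+1)
        = (A + B * C.K k) * C.cov D S k * (A + B * C.K k)ᵀ + D * Dᵀ from rfl,
      show C.cov D S' (k+1)
        = (A + B * C.K k) * C.cov D S' k * (A + B * C.K k)ᵀ + D * Dᵀ from rfl,
      show C.clProd (k+1) = (A + B * C.K k) * C.clProd k from rfl,
      Matrix.transpose_mul]
    have : (A + B * C.K k) * C.cov D S k * (A + B * C.K k)ᵀ + D * Dᵀ
        - ((A + B * C.K k) * C.cov D S' k * (A + B * C.K k)ᵀ + D * Dᵀ)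
        = (A + B * C.K k) * (C.cov D S k - C.cov D S' k) * (A + B * C.K k)ᵀ := by
      noncomm_ring
    rw [this, ih]
    noncomm_ring

lemma covlam_psd {n m T : ℕ} {A : Matrix (Fin n) (Fin n) ℝ} {B : Matrix (Fin n) (Fin m) ℝ}
    (C : Policy n m T A B) (D : Matrix (Fin n) (Fin n) ℝ) {lam : ℝ} (hlam : 0 ≤ lam) :
    ∀ k, (C.cov D (lam • 1) k - lam • (C.clProd k * (C.clProd k)ᵀ)).PosSemidef
  | 0 => by
    simp only [Policy.cov, Policy.clProd, Matrix.transpose_one, mul_one, sub_self]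
    exact Matrix.PosSemidef.zero
  | (k+1) => by
    have ih := covlam_psd C D hlam k
    have heq : C.cov D (lam • 1) (k+1) - lam • (C.clProd (k+1) * (C.clProd (k+1))ᵀ)
        = (A + B * C.K k) * (C.cov D (lam • 1) k - lam • (C.clProd k * (C.clProd k)ᵀ))
          * (A + B * C.K k)ᵀ + D * Dᵀ := by
      rw [show C.cov D (lam • (1:Matrix (Fin n) (Fin n) ℝ)) (k+1)
          = (A + B * C.K k) * C.cov D (lam • 1) k * (A + B * C.K k)ᵀ + D * Dᵀ from rfl,
        show C.clProd (k+1) = (A + B * C.K k) * C.clProd k from rfl,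
        Matrix.transpose_mul]
      simp only [Matrix.mul_sub, Matrix.sub_mul, mul_smul_comm, smul_mul_assoc,
        Matrix.mul_assoc]
      abel
    rw [heq]
    exact (psd_conj ih _).add (psd_mul_transpose D)

-- ## the key covariance square-root bound

lemma cov_quad_bound {n m T : ℕ} {A : Matrix (Fin n) (Fin n) ℝ} {B : Matrix (Fin n) (Fin m) ℝ}
    (C : Policy n m T A B) (D : Matrix (Fin n) (Fin n) ℝ) (Sig0 : Matrix (Fin n) (Fin n) ℝ)
    {lam : ℝ} (hlam : 0 ≤ lam) (hsig : lam ≤ lamMax Sig0) (k : ℕ) (a : Fin n → ℝ) :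
    Real.sqrt (a ⬝ᵥ (C.cov D Sig0 k).mulVec a)
      ≤ Real.sqrt (a ⬝ᵥ (C.cov D (lam • 1) k).mulVec a)
        + (Real.sqrt (lamMax Sig0) - Real.sqrt lam) * euclNorm ((C.clProd k)ᵀ.mulVec a) := by
  set z := (C.clProd k)ᵀ.mulVec a with hz
  set u := a ⬝ᵥ (C.cov D (lam • 1) k).mulVec a with hu
  -- F2 : lam * ‖z‖² ≤ u
  have hF2 : lam * euclNorm z ^ 2 ≤ u := by
    have hpsd := psd_dot (covlam_psd C D hlam k) a
    have e1 : a ⬝ᵥ (C.cov D (lam • 1) k - lam • (C.clProd k * (C.clProd k)ᵀ)).mulVec a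
        = u - lam * euclNorm z ^ 2 := by
      rw [Matrix.sub_mulVec, dotProduct_sub, Matrix.smul_mulVec,
        dotProduct_smul, smul_eq_mul]
      congr 1
      rw [← Matrix.mulVec_mulVec, dot_mulVec_left, ← hz, euclNorm_sq]
    linarith [e1 ▸ hpsd]
  -- F1 : a⬝covΣ a ≤ u + (σ−λ)‖z‖²
  have hF1 : a ⬝ᵥ (C.cov D Sig0 k).mulVec a ≤ u + (lamMax Sig0 - lam) * euclNorm z ^ 2 := by
    have hdiff := cov_sub C D Sig0 (lam • 1) k
    have e2 : a ⬝ᵥ (C.cov D Sig0 k).mulVec a - u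
        = z ⬝ᵥ Sig0.mulVec z - lam * euclNorm z ^ 2 := by
      have : a ⬝ᵥ (C.cov D Sig0 k).mulVec a - u
          = a ⬝ᵥ (C.cov D Sig0 k - C.cov D (lam • 1) k).mulVec a := by
        rw [Matrix.sub_mulVec, dotProduct_sub]
      rw [this, hdiff, quad_conj, Matrix.sub_mulVec, dotProduct_sub, quad_smul_one]
    have e3 : z ⬝ᵥ Sig0.mulVec z ≤ lamMax Sig0 * euclNorm z ^ 2 := quad_le_lamMax_sq Sig0 z
    nlinarith [e2, e3]
  exact sqrt_key hlam hsig (euclNorm_nonneg' z) hF2 hF1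

end Aux

/-- Ball invariance, Lemma 1. -/
theorem ball_invariance (n m T I J : ℕ) (hn : 1 ≤ n) (hm : 1 ≤ m) (hT : 1 ≤ T)
    (c : ℝ) (hc : 0 < c)
    (A : Matrix (Fin n) (Fin n) ℝ) (B : Matrix (Fin n) (Fin m) ℝ)
    (D : Matrix (Fin n) (Fin n) ℝ)
    (ax : Fin I → Fin n → ℝ) (bx : Fin I → ℝ)
    (au : Fin J → Fin m → ℝ) (bu : Fin J → ℝ)
    (C : Policy n m T A B) (muI : Fin n → ℝ) (hx0 : C.xbar 0 = muI)
    (rI rN lam : ℝ) (hrI : 0 ≤ rI) (hrN : 0 ≤ rN) (hlam : 0 ≤ lam) :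
    (∀ mu0 : Fin n → ℝ,
        inBall c muI rI mu0 (lam • (1 : Matrix (Fin n) (Fin n) ℝ)) →
        stateOK c ax bx D C mu0 (lam • 1) ∧ ctrlOK c au bu D C mu0 (lam • 1) ∧
        inBall c (C.xbar T) rN (C.mean mu0 T) (C.cov D (lam • 1) T))
    ↔
    (∀ (mu0 : Fin n → ℝ) (Sig0 : Matrix (Fin n) (Fin n) ℝ),
        Sig0.PosSemidef →
        (Sig0 - lam • (1 : Matrix (Fin n) (Fin n) ℝ)).PosSemidef →
        inBall c muI rI mu0 Sig0 →
        stateOK c ax bx D C mu0 Sig0 ∧ ctrlOK c au bu D C mu0 Sig0 ∧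
        inBall c (C.xbar T) rN (C.mean mu0 T) (C.cov D Sig0 T)) := by
  constructor
  · -- hard direction
    intro h mu0 Sig0 hPSD hdiff hball
    -- σ ≥ λ
    have hsig : lam ≤ lamMax Sig0 := by
      set v : Fin n → ℝ := Pi.single (⟨0, hn⟩ : Fin n) (1:ℝ) with hv
      have hv1 : euclNorm v = 1 := euclNorm_single hn
      have h1 : 0 ≤ v ⬝ᵥ (Sig0 - lam • 1).mulVec v := psd_dot hdiff v
      have h2 : v ⬝ᵥ (Sig0 - lam • 1).mulVec v
          = v ⬝ᵥ Sig0.mulVec v - lam * euclNorm v ^ 2 := by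
        rw [Matrix.sub_mulVec, dotProduct_sub, quad_smul_one]
      have h3 := quad_le_lamMax Sig0 hv1
      rw [hv1] at h2
      nlinarith
    have hsig0 : 0 ≤ lamMax Sig0 := le_trans hlam hsig
    set R := euclNorm (mu0 - muI) with hRdef
    have hR0 : 0 ≤ R := euclNorm_nonneg' _
    have hball' : R + c * Real.sqrt (lamMax Sig0) ≤ rI := hball
    set ρ := c * (Real.sqrt (lamMax Sig0) - Real.sqrt lam) with hrhodef
    have hrho0 : 0 ≤ ρ :=
      mul_nonneg hc.le (sub_nonneg.mpr (Real.sqrt_le_sqrt hsig))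
    have hRrho : 0 ≤ R + ρ := by linarith
    have H : ∀ w : Fin n → ℝ, euclNorm w ≤ R + ρ →
        stateOK c ax bx D C (muI + w) (lam • 1) ∧ ctrlOK c au bu D C (muI + w) (lam • 1) ∧
        inBall c (C.xbar T) rN (C.mean (muI + w) T) (C.cov D (lam • 1) T) := by
      intro w hw
      apply h
      show euclNorm (muI + w - muI) + c * Real.sqrt (lamMax (lam • (1:Matrix (Fin n) (Fin n) ℝ))) ≤ rI
      rw [add_sub_cancel_left, lamMax_smul_one hn]
      have : ρ + c * Real.sqrt lam = c * Real.sqrt (lamMax Sig0) := by rw [hrhodef]; ring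
      linarith
    have hmeanw : ∀ k, k ≤ T → ∀ w : Fin n → ℝ,
        C.mean (muI + w) k = C.xbar k + (C.clProd k).mulVec w := by
      intro k hk w
      have h1 := mean_sub C (muI + w) k hk
      rw [hx0, add_sub_cancel_left] at h1
      rw [sub_eq_iff_eq_add.mp h1, add_comm]
    have hmean0 : ∀ k, k ≤ T →
        C.mean mu0 k = C.xbar k + (C.clProd k).mulVec (mu0 - muI) := by
      intro k hk
      have h1 := mean_sub C mu0 k hk
      rw [hx0] at h1
      rw [sub_eq_iff_eq_add.mp h1, add_comm]
    refine ⟨?_, ?_, ?_⟩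
    · -- stateOK
      intro i k hk
      set Φ := C.clProd k with hPhi
      set a := ax i with ha
      set z := Φᵀ.mulVec a with hzdef
      obtain ⟨w, hw1, hw2⟩ := exists_dir hRrho z
      have Hw := (H w hw1).1 i k hk
      rw [hmeanw k hk w, dotProduct_add, dot_mulVec_left] at Hw
      have hq := cov_quad_bound C D Sig0 hlam hsig k a
      have hzd : z ⬝ᵥ (mu0 - muI) ≤ euclNorm z * R := dot_le_enorm z (mu0 - muI)
      rw [hmean0 k hk, dotProduct_add, dot_mulVec_left]
      have hcq : c * Real.sqrt (a ⬝ᵥ (C.cov D Sig0 k).mulVec a)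
          ≤ c * Real.sqrt (a ⬝ᵥ (C.cov D (lam • 1) k).mulVec a) + ρ * euclNorm z := by
        have := mul_le_mul_of_nonneg_left hq hc.le
        rw [hrhodef]
        linarith [this]
      have hexp : (R + ρ) * euclNorm z = R * euclNorm z + ρ * euclNorm z := by ring
      have hz0 : 0 ≤ euclNorm z := euclNorm_nonneg' z
      linarith [Hw, hw2, hzd, hcq]
    · -- ctrlOK
      intro j k hk
      have hkT : k ≤ T := le_of_lt hk
      set Φ := C.clProd k with hPhi
      set a := (C.K k)ᵀ.mulVec (au j) with ha
      set z := Φᵀ.mulVec a with hzdef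
      obtain ⟨w, hw1, hw2⟩ := exists_dir hRrho z
      have Hw := (H w hw1).2.1 j k hk
      have hmw : C.mean (muI + w) k - C.xbar k = Φ.mulVec w := by
        rw [hmeanw k hkT w, add_sub_cancel_left]
      rw [hmw, dotProduct_add, dot_mulVec_left, ← ha, dot_mulVec_left, ← hzdef] at Hw
      have hquadw : au j ⬝ᵥ (C.K k * C.cov D (lam • 1) k * (C.K k)ᵀ).mulVec (au j)
          = a ⬝ᵥ (C.cov D (lam • 1) k).mulVec a := quad_conj (C.K k) _ (au j)
      rw [hquadw] at Hw
      have hquad0 : au j ⬝ᵥ (C.K k * C.cov D Sig0 k * (C.K k)ᵀ).mulVec (au j)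
          = a ⬝ᵥ (C.cov D Sig0 k).mulVec a := quad_conj (C.K k) _ (au j)
      have hm0 : C.mean mu0 k - C.xbar k = Φ.mulVec (mu0 - muI) := by
        rw [hmean0 k hkT, add_sub_cancel_left]
      rw [hm0, hquad0, dotProduct_add, dot_mulVec_left, ← ha, dot_mulVec_left, ← hzdef]
      have hq := cov_quad_bound C D Sig0 hlam hsig k a
      have hzd : z ⬝ᵥ (mu0 - muI) ≤ euclNorm z * R := dot_le_enorm z (mu0 - muI)
      have hcq : c * Real.sqrt (a ⬝ᵥ (C.cov D Sig0 k).mulVec a)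
          ≤ c * Real.sqrt (a ⬝ᵥ (C.cov D (lam • 1) k).mulVec a) + ρ * euclNorm z := by
        have := mul_le_mul_of_nonneg_left hq hc.le
        rw [hrhodef]
        linarith [this]
      have hz0 : 0 ≤ euclNorm z := euclNorm_nonneg' z
      linarith [Hw, hw2, hzd, hcq]
    · -- terminal ball
      show euclNorm (C.mean mu0 T - C.xbar T) + c * Real.sqrt (lamMax (C.cov D Sig0 T)) ≤ rN
      have hd : C.mean mu0 T - C.xbar T = (C.clProd T).mulVec (mu0 - muI) := by
        rw [hmean0 T le_rfl, add_sub_cancel_left]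
      set L := lamMax (C.cov D (lam • 1) T) with hL
      have hHterm : ∀ w : Fin n → ℝ, euclNorm w ≤ R + ρ →
          euclNorm ((C.clProd T).mulVec w) + c * Real.sqrt L ≤ rN := by
        intro w hw
        have h1 := (H w hw).2.2
        have h2 : euclNorm (C.mean (muI + w) T - C.xbar T)
            + c * Real.sqrt (lamMax (C.cov D (lam • 1) T)) ≤ rN := h1
        rw [hmeanw T le_rfl w, add_sub_cancel_left] at h2
        exact h2
      have hM0 : 0 ≤ rN - c * Real.sqrt L := by
        have := hHterm 0 (by rw [euclNorm_zero']; exact hRrho)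
        rw [Matrix.mulVec_zero, euclNorm_zero'] at this
        linarith
      obtain ⟨vs, hvs, hls⟩ := lamMax_mem hn (C.cov D Sig0 T)
      set z := (C.clProd T)ᵀ.mulVec vs with hzdef
      have hq := cov_quad_bound C D Sig0 hlam hsig T vs
      have hu_le : vs ⬝ᵥ (C.cov D (lam • 1) T).mulVec vs ≤ L := quad_le_lamMax _ hvs
      have hsqrtL : Real.sqrt (vs ⬝ᵥ (C.cov D (lam • 1) T).mulVec vs) ≤ Real.sqrt L :=
        Real.sqrt_le_sqrt hu_le
      have hsq : Real.sqrt (lamMax (C.cov D Sig0 T))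
          ≤ Real.sqrt L + (Real.sqrt (lamMax Sig0) - Real.sqrt lam) * euclNorm z := by
        rw [hls]
        exact hq.trans (add_le_add_left hsqrtL _)
      have hz0 : 0 ≤ euclNorm z := euclNorm_nonneg' z
      rcases eq_or_lt_of_le hRrho with heq | hpos
      · -- degenerate: R = ρ = 0
        have hReq : R = 0 := by linarith [hrho0, hR0, heq.symm]
        have hrhoeq : ρ = 0 := by linarith [hrho0, hR0, heq.symm]
        have hd0 : mu0 - muI = 0 := euclNorm_eq_zero' hReq
        rw [hd, hd0, Matrix.mulVec_zero, euclNorm_zero']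
        have hc1 : c * Real.sqrt (lamMax (C.cov D Sig0 T))
            ≤ c * Real.sqrt L + ρ * euclNorm z := by
          have := mul_le_mul_of_nonneg_left hsq hc.le
          rw [hrhodef]
          linarith [this]
        rw [hrhoeq] at hc1
        linarith [hc1, hM0]
      · set s := (rN - c * Real.sqrt L) / (R + ρ) with hs
        have hs0 : 0 ≤ s := div_nonneg hM0 hpos.le
        have hbound : ∀ x : Fin n → ℝ,
            euclNorm ((C.clProd T).mulVec x) ≤ s * euclNorm x := by
          intro x
          rcases eq_or_ne x 0 with rfl | hx
          · simp [Matrix.mulVec_zero, euclNorm_zero']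
          · have hex := euclNorm_pos hx
            have hwnorm : euclNorm (((R + ρ) / euclNorm x) • x) = R + ρ := by
              rw [euclNorm_smul, abs_of_pos (div_pos hpos hex)]
              field_simp
            have h1 := hHterm _ (le_of_eq hwnorm)
            rw [Matrix.mulVec_smul, euclNorm_smul, abs_of_pos (div_pos hpos hex)] at h1
            -- (R+ρ)/‖x‖ * ‖Φx‖ + c√L ≤ rN
            rw [hs, div_mul_eq_mul_div, le_div_iff₀ hpos]
            calc euclNorm ((C.clProd T).mulVec x) * (R + ρ)
                = ((R + ρ) / euclNorm x * euclNorm ((C.clProd T).mulVec x)) * euclNorm x := by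
                  field_simp
              _ ≤ (rN - c * Real.sqrt L) * euclNorm x := by
                  have h2 : (R + ρ) / euclNorm x * euclNorm ((C.clProd T).mulVec x)
                      ≤ rN - c * Real.sqrt L := by linarith
                  exact mul_le_mul_of_nonneg_right h2 hex.le
        have h1 : euclNorm ((C.clProd T).mulVec (mu0 - muI)) ≤ s * R := hbound (mu0 - muI)
        have h2 : euclNorm z ≤ s := by
          rcases eq_or_lt_of_le hz0 with hz | hz
          · rw [← hz]; exact hs0
          · have e : euclNorm z ^ 2 = vs ⬝ᵥ (C.clProd T).mulVec z := by
              rw [euclNorm_sq]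
              exact (dot_mulVec_left (C.clProd T) vs z).symm
            have e2 := dot_le_enorm vs ((C.clProd T).mulVec z)
            have e3 := hbound z
            rw [hvs] at e2
            nlinarith
        have hc1 : c * Real.sqrt (lamMax (C.cov D Sig0 T))
            ≤ c * Real.sqrt L + ρ * euclNorm z := by
          have := mul_le_mul_of_nonneg_left hsq hc.le
          rw [hrhodef]
          linarith [this]
        have hseq : s * (R + ρ) = rN - c * Real.sqrt L := by
          rw [hs]; field_simp
        rw [hd]
        have hmul : ρ * euclNorm z ≤ ρ * s := mul_le_mul_of_nonneg_left h2 hrho0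
        linarith [h1, hc1, hseq, hmul]
  · -- easy direction
    intro h mu0 hball
    have h0 : (lam • (1 : Matrix (Fin n) (Fin n) ℝ)).PosSemidef := psd_smul_one hlam
    have h1 : ((lam • (1 : Matrix (Fin n) (Fin n) ℝ)) - lam • 1).PosSemidef := by
      rw [sub_self]; exact Matrix.PosSemidef.zero
    exact h mu0 (lam • 1) h0 h1 hball
end

section
/- (Strict coverage gain without process noise and state constraints, Lemma 4.) Assume zero process noise, D = 0, that A is invertible, that there are no state half-space constraints, and that the control polytope U = {u ∈ ℝᵐ : (a_j^u)ᵀ u ≤ b_j^u for all j} is nonempty and compact. Let 𝒢 = P^BALL(μ_G, r_G) and let 𝒢⁻ be a set of moment pairs such that 𝒢⁻ ⊆ 𝒢 and such that the mean projection Proj(𝒢⁻) = {μ : ∃Σ, (μ, Σ) ∈ 𝒢⁻} is contained in a closed Euclidean ball 𝔹(c₀, r₀) with ‖c₀ − μ_G‖₂ + r₀ < r_G. If BRS_T(𝒢⁻) is nonempty, then BRS_T(𝒢⁻) is a strict subset of BRS_T(𝒢). -/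
open Matrix

section AuxLemmas
variable {n m T : ℕ} {A : Matrix (Fin n) (Fin n) ℝ} {B : Matrix (Fin n) (Fin m) ℝ}

noncomputable def psiAux (A : Matrix (Fin n) (Fin n) ℝ) (B : Matrix (Fin n) (Fin m) ℝ)
    (u : ℕ → Fin m → ℝ) (x0 : Fin n → ℝ) : ℕ → Fin n → ℝ
  | 0 => x0
  | k + 1 => A.mulVec (psiAux A B u x0 k) + B.mulVec (u k)

lemma psiAux_congr (u u' : ℕ → Fin m → ℝ) (x0 : Fin n → ℝ) (k : ℕ)
    (h : ∀ j < k, u j = u' j) : psiAux A B u x0 k = psiAux A B u' x0 k := by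
  induction k with
  | zero => rfl
  | succ k ih =>
      simp only [psiAux, ih (fun j hj => h j (Nat.lt_succ_of_lt hj)), h k (Nat.lt_succ_self k)]

lemma psiAux_shift (u : ℕ → Fin m → ℝ) (x0 : Fin n → ℝ) (k : ℕ) :
    psiAux A B u x0 k = psiAux A B u 0 k + (A ^ k).mulVec x0 := by
  induction k with
  | zero => simp [psiAux]
  | succ k ih =>
      simp only [psiAux, ih, Matrix.mulVec_add, Matrix.mulVec_mulVec, ← pow_succ']
      abel

lemma xbar_eq_psiAux (C : Policy n m T A B) : ∀ k, k ≤ T →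
    C.xbar k = psiAux A B C.ubar (C.xbar 0) k := by
  intro k
  induction k with
  | zero => intro _; rfl
  | succ k ih =>
      intro hk
      rw [C.xbar_dyn k (Nat.lt_of_succ_le hk), ih (Nat.le_of_succ_le hk)]
      rfl

lemma mean_eq_xbar (C : Policy n m T A B) (mu0 : Fin n → ℝ) (h0 : C.xbar 0 = mu0) :
    ∀ k, k ≤ T → C.mean mu0 k = C.xbar k := by
  intro k
  induction k with
  | zero => intro _; exact h0.symm
  | succ k ih =>
      intro hk
      have hk' := Nat.le_of_succ_le hk
      rw [Policy.mean, ih hk', sub_self, Matrix.mulVec_zero, Matrix.mulVec_zero, add_zero,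
        C.xbar_dyn k (Nat.lt_of_succ_le hk)]

lemma cov_zero_zero (C : Policy n m T A B) : ∀ k, C.cov 0 0 k = 0 := by
  intro k
  induction k with
  | zero => rfl
  | succ k ih => simp [Policy.cov, ih]

lemma psiAux_cont (T : ℕ) (K : ℕ) :
    Continuous fun u : Fin T → Fin m → ℝ =>
      psiAux A B (fun k => if h : k < T then u ⟨k, h⟩ else 0) 0 K := by
  induction K with
  | zero => exact continuous_const
  | succ K ih =>
      refine Continuous.add ?_ ?_
      · exact Continuous.matrix_mulVec continuous_const ih
      · by_cases h : K < T
        · simp only [dif_pos h]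
          exact Continuous.matrix_mulVec continuous_const (continuous_apply _)
        · simp only [dif_neg h]
          exact continuous_const

lemma apply_le_enorm (w : Fin n → ℝ) (i : Fin n) : w i ≤ euclNorm w := by
  calc w i ≤ |w i| := le_abs_self _
    _ = Real.sqrt (w i ^ 2) := (Real.sqrt_sq_eq_abs _).symm
    _ ≤ euclNorm w := Real.sqrt_le_sqrt
        (Finset.single_le_sum (f := fun j => w j ^ 2) (fun j _ => sq_nonneg _)
          (Finset.mem_univ i))

lemma enorm_ite (hn : 0 < n) (r : ℝ) (hr : 0 ≤ r) :
    euclNorm (fun i : Fin n => if i = (⟨0, hn⟩ : Fin n) then r else 0) = r := by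
  unfold euclNorm
  have : ∀ i : Fin n, (if i = (⟨0, hn⟩ : Fin n) then r else 0) ^ 2
      = if i = (⟨0, hn⟩ : Fin n) then r ^ 2 else 0 := by
    intro i; split <;> ring
  rw [Finset.sum_congr rfl fun i _ => this i, Finset.sum_ite_eq']
  simp [Real.sqrt_sq hr]

lemma lamMax_zero (hn : 0 < n) : lamMax (0 : Matrix (Fin n) (Fin n) ℝ) = 0 := by
  have hset : {r : ℝ | ∃ v : Fin n → ℝ, euclNorm v = 1 ∧ r = v ⬝ᵥ (0 : Matrix (Fin n) (Fin n) ℝ).mulVec v}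
      = {0} := by
    ext r
    simp only [Matrix.zero_mulVec, dotProduct_zero, Set.mem_setOf_eq, Set.mem_singleton_iff]
    constructor
    · rintro ⟨v, _, h⟩; exact h
    · intro h
      exact ⟨fun i => if i = (⟨0, hn⟩ : Fin n) then 1 else 0, enorm_ite hn 1 one_pos.le, h⟩
  rw [lamMax, hset, csSup_singleton]

end AuxLemmas

/-- Strict coverage gain without process noise and state constraints, Lemma 4.
There are no state half-space constraints (the state-constraint family is indexed by `Fin 0`). -/
theorem strict_coverage_gain (n m T J : ℕ) (hn : 1 ≤ n) (hm : 1 ≤ m) (hT : 1 ≤ T)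
    (c : ℝ) (hc : 0 < c)
    (A : Matrix (Fin n) (Fin n) ℝ) (hA : IsUnit A)
    (B : Matrix (Fin n) (Fin m) ℝ)
    (D : Matrix (Fin n) (Fin n) ℝ) (hD : D = 0)
    (au : Fin J → Fin m → ℝ) (bu : Fin J → ℝ)
    -- the control polytope is nonempty and compact:
    (hUne : {u : Fin m → ℝ | ∀ j, au j ⬝ᵥ u ≤ bu j}.Nonempty)
    (hUcpt : IsCompact {u : Fin m → ℝ | ∀ j, au j ⬝ᵥ u ≤ bu j})
    (muG : Fin n → ℝ) (rG : ℝ) (hrG : 0 ≤ rG)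
    -- 𝒢 = P^BALL(μ_G, r_G) and 𝒢⁻ ⊆ 𝒢 with small mean projection:
    (Gminus : Set ((Fin n → ℝ) × Matrix (Fin n) (Fin n) ℝ))
    (hGsub : Gminus ⊆ {p | p.2.PosSemidef ∧ inBall c muG rG p.1 p.2})
    (c0 : Fin n → ℝ) (r0 : ℝ) (hr0 : 0 ≤ r0)
    (hproj : Proj Gminus ⊆ {mu : Fin n → ℝ | euclNorm (mu - c0) ≤ r0})
    (hlt : euclNorm (c0 - muG) + r0 < rG)
    (hne : (BRS T A B D c (fun i : Fin 0 => Fin.elim0 i) (fun i : Fin 0 => Fin.elim0 i)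
      au bu Gminus).Nonempty) :
    BRS T A B D c (fun i : Fin 0 => Fin.elim0 i) (fun i : Fin 0 => Fin.elim0 i) au bu Gminus
      ⊂ BRS T A B D c (fun i : Fin 0 => Fin.elim0 i) (fun i : Fin 0 => Fin.elim0 i) au bu
          {p | p.2.PosSemidef ∧ inBall c muG rG p.1 p.2} := by

  subst hD
  have hsub : BRS T A B 0 c (fun i : Fin 0 => Fin.elim0 i) (fun i : Fin 0 => Fin.elim0 i)
      au bu Gminus ⊆ BRS T A B 0 c (fun i : Fin 0 => Fin.elim0 i) (fun i : Fin 0 => Fin.elim0 i)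
      au bu {p | p.2.PosSemidef ∧ inBall c muG rG p.1 p.2} := by
    rintro p ⟨hPSD, C, h0, hs, hc', ht⟩
    exact ⟨hPSD, C, h0, hs, hc', hGsub ht⟩
  rw [Set.ssubset_iff_of_subset hsub]
  have hn0 : 0 < n := hn
  set i0 : Fin n := ⟨0, hn0⟩ with hi0
  set U : Set (Fin m → ℝ) := {u : Fin m → ℝ | ∀ j, au j ⬝ᵥ u ≤ bu j} with hU
  set ext : (Fin T → Fin m → ℝ) → ℕ → Fin m → ℝ :=
    fun u k => if h : k < T then u ⟨k, h⟩ else 0 with hext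
  -- minimizer of the i0-coordinate of the forced response over the control polytope
  have hcont : Continuous fun u : Fin T → Fin m → ℝ => psiAux A B (ext u) 0 T i0 :=
    (continuous_apply i0).comp (psiAux_cont T T)
  have hcpt : IsCompact (Set.univ.pi fun _ : Fin T => U) := isCompact_univ_pi fun _ => hUcpt
  obtain ⟨u0, hu0⟩ := hUne
  have hne' : (Set.univ.pi fun _ : Fin T => U).Nonempty := ⟨fun _ => u0, fun k _ => hu0⟩
  obtain ⟨umin, huminU, hmin⟩ := hcpt.exists_isMinOn hne' hcont.continuousOn
  set us : ℕ → Fin m → ℝ := ext umin with hus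
  set AT : Matrix (Fin n) (Fin n) ℝ := A ^ T with hAT
  have hdet : IsUnit AT.det := (Matrix.isUnit_iff_isUnit_det AT).mp (hA.pow T)
  set e0 : Fin n → ℝ := fun i => if i = i0 then 1 else 0 with he0
  set target : Fin n → ℝ := muG + fun i => if i = i0 then rG else 0 with htarget
  set mu0' : Fin n → ℝ := AT⁻¹.mulVec (target - psiAux A B us 0 T) with hmu0'
  have hATmu : AT.mulVec mu0' = target - psiAux A B us 0 T := by
    rw [hmu0', Matrix.mulVec_mulVec, Matrix.mul_nonsing_inv _ hdet, Matrix.one_mulVec]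
  -- the witness policy
  set Cw : Policy n m T A B :=
    ⟨fun k => psiAux A B us mu0' k, us, fun _ => 0, fun k _ => rfl⟩ with hCw
  have hCwx0 : Cw.xbar 0 = mu0' := rfl
  have hCwmean : ∀ k, k ≤ T → Cw.mean mu0' k = psiAux A B us mu0' k := fun k hk =>
    mean_eq_xbar Cw mu0' rfl k hk
  have hCwcov : ∀ k, Cw.cov 0 0 k = 0 := cov_zero_zero Cw
  have hmeanT : Cw.mean mu0' T = target := by
    rw [hCwmean T le_rfl, psiAux_shift, hATmu]
    abel
  refine ⟨(mu0', 0), ⟨Matrix.PosSemidef.zero, Cw, rfl, ?_, ?_, ?_⟩, ?_⟩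
  · intro i; exact Fin.elim0 i
  · -- ctrlOK for the witness
    intro j k hk
    have hm : Cw.mean mu0' k = Cw.xbar k := mean_eq_xbar Cw mu0' rfl k hk.le
    have hcovk := hCwcov k
    have hK : Cw.K k = 0 := rfl
    rw [hm, sub_self, hK, hcovk]
    simp only [Matrix.zero_mul, Matrix.mul_zero, Matrix.zero_mulVec, dotProduct_zero,
      Real.sqrt_zero, mul_zero, add_zero, Matrix.mulVec_zero]
    have : us k = umin ⟨k, hk⟩ := by simp [hus, hext, hk]
    show au j ⬝ᵥ us k ≤ bu j
    rw [this]
    exact huminU ⟨k, hk⟩ (Set.mem_univ _) j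
  · -- terminal membership in G
    refine ⟨?_, ?_⟩
    · rw [hCwcov T]; exact Matrix.PosSemidef.zero
    · rw [hCwcov T, hmeanT]
      unfold inBall
      rw [lamMax_zero hn0, Real.sqrt_zero, mul_zero, add_zero]
      have : target - muG = fun i => if i = i0 then rG else 0 := by
        rw [htarget]; funext i; simp
      rw [this, enorm_ite hn0 rG hrG]
  · -- the witness is not in BRS of Gminus
    rintro ⟨-, C, h0, -, hctrl, ht⟩
    have hμT : euclNorm (C.mean mu0' T - c0) ≤ r0 := hproj ⟨_, ht⟩
    -- controls are feasible
    have huC : ∀ k, k < T → C.ubar k ∈ U := by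
      intro k hk j
      have h1 := hctrl j k hk
      rw [mean_eq_xbar C mu0' h0 k hk.le, sub_self, Matrix.mulVec_zero, add_zero] at h1
      have h2 : 0 ≤ c * Real.sqrt (au j ⬝ᵥ (C.K k * C.cov 0 0 k * (C.K k)ᵀ).mulVec (au j)) :=
        mul_nonneg hc.le (Real.sqrt_nonneg _)
      linarith
    set uC : Fin T → Fin m → ℝ := fun k => C.ubar k with huCdef
    have huCmem : uC ∈ Set.univ.pi fun _ : Fin T => U := fun k _ => huC k k.isLt
    have hpsiC : psiAux A B C.ubar 0 T = psiAux A B (ext uC) 0 T := by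
      refine psiAux_congr _ _ _ _ fun j hj => ?_
      simp [hext, huCdef, hj]
    have hminle : psiAux A B us 0 T i0 ≤ psiAux A B C.ubar 0 T i0 := by
      rw [hpsiC]
      exact hmin huCmem
    have hmeanTC : C.mean mu0' T = psiAux A B us 0 T + AT.mulVec mu0'
        + (psiAux A B C.ubar 0 T - psiAux A B us 0 T) := by
      rw [mean_eq_xbar C mu0' h0 T le_rfl, xbar_eq_psiAux C T le_rfl, h0,
        psiAux_shift]
      abel
    have hlow : muG i0 + rG ≤ C.mean mu0' T i0 := by
      have : C.mean mu0' T i0 = target i0 + (psiAux A B C.ubar 0 T i0 - psiAux A B us 0 T i0) := by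
        rw [hmeanTC, hATmu]
        simp [Pi.add_apply, Pi.sub_apply]
      rw [this]
      have ht0 : target i0 = muG i0 + rG := by simp [htarget]
      rw [ht0]
      linarith
    have hup1 : C.mean mu0' T i0 - c0 i0 ≤ r0 :=
      le_trans (apply_le_enorm (C.mean mu0' T - c0) i0) hμT
    have hup2 : c0 i0 - muG i0 ≤ euclNorm (c0 - muG) := apply_le_enorm (c0 - muG) i0
    linarith
end

section
/- For positive definite n×n real matrices P and Q and s ∈ ℝⁿ, the ellipsoid ℰ(s, P) = {x ∈ ℝⁿ : (x − s)ᵀ P⁻¹ (x − s) ≤ 1} is contained in ℰ(s, Q) = {x ∈ ℝⁿ : (x − s)ᵀ Q⁻¹ (x − s) ≤ 1} if and only if P ⪯ Q in the positive-semidefinite (Loewner) order. -/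
open Matrix

open scoped MatrixOrder

/-- Inverse is antitone on positive definite matrices. -/
lemma inv_sub_inv_psd {n : ℕ} {A B : Matrix (Fin n) (Fin n) ℝ}
    (hA : A.PosDef) (hB : B.PosDef) (h : (B - A).PosSemidef) :
    (A⁻¹ - B⁻¹).PosSemidef := by
  set R := CFC.sqrt B with hRdef
  have hR : R.PosSemidef := (CFC.sqrt_nonneg B).posSemidef
  have hRR : R * R = B := CFC.sqrt_mul_sqrt_self B hB.posSemidef.nonneg
  have hdetB : B.det ≠ 0 := hB.det_pos.ne'
  have hdetR : IsUnit R.det := by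
    have : R.det * R.det = B.det := by rw [← det_mul, hRR]
    exact isUnit_iff_ne_zero.2 fun h0 => hdetB (by rw [← this, h0, zero_mul])
  have hdetA : IsUnit A.det := hA.isUnit |>.map (MonoidHom.id _) |> fun _ => isUnit_iff_ne_zero.2 hA.det_pos.ne'
  set T := R⁻¹ with hTdef
  have hTH : Tᴴ = T := (hR.isHermitian.inv).eq
  have hRT : R * T = 1 := mul_nonsing_inv R hdetR
  have hTR : T * R = 1 := nonsing_inv_mul R hdetR
  have hAAinv : A * A⁻¹ = 1 := mul_nonsing_inv A hdetA
  set M := T * A * T with hMdef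
  -- 1 - M is PSD
  have h1M : (1 - M).PosSemidef := by
    have := h.conjTranspose_mul_mul_same T
    rw [hTH] at this
    have e : T * (B - A) * T = 1 - M := by
      have eB : T * B * T = 1 := by
        rw [← hRR, show T * (R * R) * T = (T * R) * (R * T) by noncomm_ring, hRT, hTR, one_mul]
      calc T * (B - A) * T = T * B * T - T * A * T := by noncomm_ring
      _ = 1 - M := by rw [eB, hMdef]
    rwa [e] at this
  -- M⁻¹ = R * A⁻¹ * R
  have hMright : M * (R * A⁻¹ * R) = 1 := by
    rw [hMdef]
    calc T * A * T * (R * A⁻¹ * R) = T * (A * (T * R) * A⁻¹) * R := by noncomm_ring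
    _ = 1 := by rw [hTR, mul_one, hAAinv, mul_one, hTR]
  have hMinv : M⁻¹ = R * A⁻¹ * R := inv_eq_right_inv hMright
  have hdetM : IsUnit M.det := isUnit_det_of_right_inverse hMright
  have hMinvPSD : (R * A⁻¹ * R).PosSemidef := by
    have := hA.inv.posSemidef.mul_mul_conjTranspose_same R
    rwa [hR.isHermitian.eq] at this
  set N := CFC.sqrt (R * A⁻¹ * R) with hNdef
  have hNPSD : N.PosSemidef := (CFC.sqrt_nonneg (R * A⁻¹ * R)).posSemidef
  have hNN : N * N = R * A⁻¹ * R := CFC.sqrt_mul_sqrt_self (R * A⁻¹ * R) hMinvPSD.nonneg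
  have hdetN : IsUnit N.det := by
    have h2 : N.det * N.det = (R * A⁻¹ * R).det := by rw [← det_mul, hNN]
    have h3 : (R * A⁻¹ * R).det ≠ 0 := by
      rw [det_mul, det_mul]
      exact mul_ne_zero (mul_ne_zero hdetR.ne_zero hA.inv.det_pos.ne') hdetR.ne_zero
    exact isUnit_iff_ne_zero.2 fun h0 => h3 (by rw [← h2, h0, zero_mul])
  have hNM : N * M * N = 1 := by
    have hMN : M * (N * N) = 1 := by rw [hNN]; exact hMright
    have : M = (N * N)⁻¹ := inv_eq_right_inv hMN ▸ (nonsing_inv_nonsing_inv M hdetM).symm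
    rw [this, Matrix.mul_inv_rev]
    calc N * (N⁻¹ * N⁻¹) * N = (N * N⁻¹) * (N⁻¹ * N) := by noncomm_ring
    _ = 1 := by rw [mul_nonsing_inv N hdetN, nonsing_inv_mul N hdetN, one_mul]
  -- key identity
  have key : (T * N) * (1 - M) * (T * N)ᴴ = A⁻¹ - B⁻¹ := by
    have hTNH : (T * N)ᴴ = N * T := by rw [conjTranspose_mul, hTH, hNPSD.isHermitian.eq]
    rw [hTNH]
    have expand : (T * N) * (1 - M) * (N * T) = T * (N * N) * T - T * (N * M * N) * T := by
      noncomm_ring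
    rw [expand, hNM, hNN]
    have e1 : T * (R * A⁻¹ * R) * T = A⁻¹ := by
      calc T * (R * A⁻¹ * R) * T = (T * R) * A⁻¹ * (R * T) := by noncomm_ring
      _ = A⁻¹ := by rw [hTR, hRT, one_mul, mul_one]
    have e2 : T * 1 * T = B⁻¹ := by
      rw [mul_one, hTdef, ← Matrix.mul_inv_rev, hRR]
    rw [e1, e2]
  rw [← key]
  exact h1M.mul_mul_conjTranspose_same (T * N)

/-- ellipsoid containment is equivalent to the Loewner order. -/
theorem ellipsoid_subset_iff_loewner (n : ℕ) (s : Fin n → ℝ)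
    (P Q : Matrix (Fin n) (Fin n) ℝ) (hP : P.PosDef) (hQ : Q.PosDef) :
    {x : Fin n → ℝ | (x - s) ⬝ᵥ P⁻¹.mulVec (x - s) ≤ 1} ⊆
      {x : Fin n → ℝ | (x - s) ⬝ᵥ Q⁻¹.mulVec (x - s) ≤ 1}
    ↔ (Q - P).PosSemidef := by
  have hPdet : IsUnit P.det := isUnit_iff_ne_zero.2 hP.det_pos.ne'
  have hQdet : IsUnit Q.det := isUnit_iff_ne_zero.2 hQ.det_pos.ne'
  constructor
  · intro hsub
    have hPQ : (P⁻¹ - Q⁻¹).PosSemidef := by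
      refine PosSemidef.of_dotProduct_mulVec_nonneg ((hP.isHermitian.inv).sub (hQ.isHermitian.inv)) fun y => ?_
      simp only [star_trivial, sub_mulVec, dotProduct_sub, sub_nonneg]
      by_cases hy : y = 0
      · simp [hy]
      · have ht : 0 < y ⬝ᵥ P⁻¹ *ᵥ y := by
          have := hP.inv.dotProduct_mulVec_pos hy; simpa using this
        set t := y ⬝ᵥ P⁻¹ *ᵥ y with htdef
        set c := (Real.sqrt t)⁻¹ with hcdef
        have hc2 : c * c * t = 1 := by
          rw [hcdef, ← mul_inv]
          rw [Real.mul_self_sqrt ht.le]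
          exact inv_mul_cancel₀ ht.ne'
        have hscale : ∀ M : Matrix (Fin n) (Fin n) ℝ,
            (c • y) ⬝ᵥ M *ᵥ (c • y) = c * c * (y ⬝ᵥ M *ᵥ y) := by
          intro M
          rw [mulVec_smul, dotProduct_smul, smul_dotProduct]
          ring_nf
        have hmem : (s + c • y) ∈ {x : Fin n → ℝ | (x - s) ⬝ᵥ P⁻¹.mulVec (x - s) ≤ 1} := by
          simp only [Set.mem_setOf_eq, add_sub_cancel_left]
          rw [show P⁻¹.mulVec (c • y) = P⁻¹ *ᵥ (c • y) from rfl, hscale, ← htdef, hc2]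
        have key := hsub hmem
        simp only [Set.mem_setOf_eq, add_sub_cancel_left] at key
        rw [show Q⁻¹.mulVec (c • y) = Q⁻¹ *ᵥ (c • y) from rfl, hscale] at key
        have hcc : 0 < c * c := by
          have : 0 < Real.sqrt t := Real.sqrt_pos.2 ht
          positivity
        nlinarith [key, hc2]
    have := inv_sub_inv_psd hQ.inv hP.inv hPQ
    rwa [nonsing_inv_nonsing_inv Q hQdet, nonsing_inv_nonsing_inv P hPdet] at this
  · intro h x hx
    have hPQ := inv_sub_inv_psd hP hQ h
    have h2 := hPQ.dotProduct_mulVec_nonneg (x - s)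
    simp only [star_trivial, sub_mulVec, dotProduct_sub, sub_nonneg] at h2
    simp only [Set.mem_setOf_eq] at hx ⊢
    exact le_trans h2 hx
end
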